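/- For every w = (w₀,w₁,w₂,w₃) ∈ ℂ⁴ ∖ {0}: (a) τ(w) has unit norm in ℝ⊕ℂ⊕ℂ; (b) τ(λw) = τ(w) for every λ ∈ ℂ ∖ {0}; and (c) for every α ∈ ℝ, τ(w₀, e^{iα}w₁, e^{2iα}w₂, e^{3iα}w₃) = R_α · τ(w), where R_α acts on ℝ⊕ℂ⊕ℂ by R_α·(t,ζ₁,ζ₂) = (t, e^{iα}ζ₁, e^{2iα}ζ₂). In other words, the twistor fibration τ: ℂP³ → S⁴ is well defined and S¹-equivariant. -/

import Mathlib

noncomputable section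

open MeasureTheory
open scoped Classical

abbrev E3 : Type := EuclideanSpace ℝ (Fin 3)

abbrev V5 : Type := ℝ × ℂ × ℂ

/-- Squared Euclidean norm on ℝ ⊕ ℂ ⊕ ℂ. -/
def nsq (p : V5) : ℝ := p.1 ^ 2 + Complex.normSq p.2.1 + Complex.normSq p.2.2

/-- Real inner product on ℝ ⊕ ℂ ⊕ ℂ. -/
def vdot (p q : V5) : ℝ :=
  p.1 * q.1 + (p.2.1 * (starRingEnd ℂ) q.2.1).re + (p.2.2 * (starRingEnd ℂ) q.2.2).re

/-- The circle action R_α · (t, ζ₁, ζ₂) = (t, e^{iα}ζ₁, e^{2iα}ζ₂) on ℝ ⊕ ℂ ⊕ ℂ. -/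
def circAct (α : ℝ) (p : V5) : V5 :=
  (p.1, Complex.exp (Complex.I * (α : ℂ)) * p.2.1,
    Complex.exp (2 * Complex.I * (α : ℂ)) * p.2.2)

/-- Rotation of ℝ³ by angle α about the x₃-axis. -/
def rot3 (α : ℝ) (x : E3) : E3 :=
  EuclideanSpace.single (0 : Fin 3) (Real.cos α * x 0 - Real.sin α * x 1) +
    EuclideanSpace.single (1 : Fin 3) (Real.sin α * x 0 + Real.cos α * x 1) +
    EuclideanSpace.single (2 : Fin 3) (x 2)

/-- The unit sphere S² ⊂ ℝ³. -/
def sphere2 : Set E3 := Metric.sphere (0 : E3) 1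

def northPole : E3 := EuclideanSpace.single (2 : Fin 3) (1 : ℝ)

def southPole : E3 := EuclideanSpace.single (2 : Fin 3) (-1 : ℝ)

/-- Degree-zero homogeneous extension of a map defined on the sphere. -/
def homExt (ω : E3 → V5) : E3 → V5 := fun x => ω (‖x‖⁻¹ • x)

def homExtR (g : E3 → ℝ) : E3 → ℝ := fun x => g (‖x‖⁻¹ • x)

/-- Squared Euclidean norm of the differential. -/
def gradSq (f : E3 → V5) (x : E3) : ℝ :=
  ∑ i : Fin 3, nsq (fderiv ℝ f x (EuclideanSpace.single i (1 : ℝ)))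

def gradSqR (f : E3 → ℝ) (x : E3) : ℝ :=
  ∑ i : Fin 3, fderiv ℝ f x (EuclideanSpace.single i (1 : ℝ)) ^ 2

/-- Componentwise Euclidean Laplacian. -/
def lap (f : E3 → V5) (x : E3) : V5 :=
  ∑ i : Fin 3,
    fderiv ℝ (fun y => fderiv ℝ f y (EuclideanSpace.single i (1 : ℝ))) x
      (EuclideanSpace.single i (1 : ℝ))

/-- ω : S² → S⁴ is a (smooth) harmonic sphere: it maps the sphere into the unit
sphere of ℝ ⊕ ℂ ⊕ ℂ, its degree-zero homogeneous extension Q is smooth away from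
the origin, and ΔQ + |∇Q|²Q = 0 on ℝ³ ∖ {0}. -/
def IsHarmonicSphere (ω : E3 → V5) : Prop :=
  (∀ x ∈ sphere2, nsq (ω x) = 1) ∧
    ContDiffOn ℝ (⊤ : ℕ∞) (homExt ω) {(0 : E3)}ᶜ ∧
    ∀ x : E3, x ≠ 0 → lap (homExt ω) x + gradSq (homExt ω) x • homExt ω x = 0

/-- S¹-equivariance of a sphere map. -/
def EquivariantS (ω : E3 → V5) : Prop :=
  ∀ α : ℝ, ∀ x ∈ sphere2, ω (rot3 α x) = circAct α (ω x)

/-- S¹-equivariance of a vector field on ℝ³. -/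
def EquivariantV (X : E3 → V5) : Prop :=
  ∀ (α : ℝ) (x : E3), X (rot3 α x) = circAct α (X x)

/-- Tangential part X_T = X - (w·X)w. -/
def tangPart (w X : E3 → V5) : E3 → V5 := fun x => X x - vdot (w x) (X x) • w x

/-- Second variation δ²E₀(w)[X] = ∫ (|∇X_T|² - |∇w|²|X_T|²). -/
def secondVar (w X : E3 → V5) : ℝ :=
  ∫ x : E3, (gradSq (tangPart w X) x - gradSq w x * nsq (tangPart w X x))

/-- Stability of a tangent map within the S¹-equivariant class. -/
def IsStable (w : E3 → V5) : Prop :=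
  ∀ X : E3 → V5, ContDiff ℝ (⊤ : ℕ∞) X → HasCompactSupport X → EquivariantV X →
    0 ≤ secondVar w X

def conj' (z : ℂ) : ℂ := (starRingEnd ℂ) z

/-- The twistor fibration, in homogeneous coordinates on ℂ⁴ ∖ {0}. -/
def tau4 (w0 w1 w2 w3 : ℂ) : V5 :=
  ((Complex.normSq w0 + Complex.normSq w3 - Complex.normSq w1 - Complex.normSq w2) /
      (Complex.normSq w0 + Complex.normSq w1 + Complex.normSq w2 + Complex.normSq w3),
    2 * (conj' w0 * w1 + conj' w2 * w3) /
      ((Complex.normSq w0 + Complex.normSq w1 + Complex.normSq w2 + Complex.normSq w3 : ℝ) : ℂ),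
    2 * (conj' w0 * w2 - conj' w1 * w3) /
      ((Complex.normSq w0 + Complex.normSq w1 + Complex.normSq w2 + Complex.normSq w3 : ℝ) : ℂ))

/-- Inverse stereographic projection ℂ → S² (from the south pole). -/
def stInv (z : ℂ) : E3 :=
  EuclideanSpace.single (0 : Fin 3) (2 * z.re / (1 + Complex.normSq z)) +
    EuclideanSpace.single (1 : Fin 3) (2 * z.im / (1 + Complex.normSq z)) +
    EuclideanSpace.single (2 : Fin 3) ((1 - Complex.normSq z) / (1 + Complex.normSq z))

/-- Equatorial embedding ω_eq^{(1)}(x) = (x₃, x₁ + ix₂, 0). -/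
def omegaEq1 (x : E3) : V5 := (x 2, (x 0 : ℂ) + (x 1 : ℂ) * Complex.I, 0)

/-- Equatorial embedding ω_eq^{(2)}(x) = (x₃, 0, x₁ + ix₂). -/
def omegaEq2 (x : E3) : V5 := (x 2, 0, (x 0 : ℂ) + (x 1 : ℂ) * Complex.I)

/-- The horizontal algebraic curve composed with the twistor fibration. -/
def liftCurve (μ1 μ2 z0 z1 : ℂ) : V5 :=
  tau4 (z0 ^ 3) (μ1 * z0 ^ 2 * z1) (μ2 * z0 * z1 ^ 2) (-(μ1 * μ2 / 3) * z1 ^ 3)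

/-- The explicit two-parameter family ω_{μ₁,μ₂} of equivariant harmonic spheres,
as a map defined on S² via the identification [z₀, z₁] ↦ σ₂⁻¹(z₁/z₀). -/
def omegaFam (μ1 μ2 : ℂ) (x : E3) : V5 :=
  if x = southPole then
    if μ1 = 0 ∧ μ2 = 0 then ((1 : ℝ), 0, 0)
    else if μ1 ≠ 0 ∧ μ2 ≠ 0 then liftCurve μ1 μ2 0 1
    else ((-1 : ℝ), 0, 0)
  else liftCurve μ1 μ2 ((1 + x 2 : ℝ) : ℂ) ((x 0 : ℂ) + (x 1 : ℂ) * Complex.I)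

/-- Wirtinger derivative ∂f/∂z̄ = ½(∂_{x₁} + i ∂_{x₂})f. -/
def wd (f : ℂ → ℂ) (z : ℂ) : ℂ :=
  (1 / 2 : ℂ) * (fderiv ℝ f z 1 + Complex.I * fderiv ℝ f z Complex.I)

/-- Surface (2-dimensional Hausdorff) measure on ℝ³. -/
def surf : Measure E3 := Measure.hausdorffMeasure 2

/-- The twistor fibration τ : ℂP³ → S⁴ is well defined and S¹-equivariant: for every
nonzero w ∈ ℂ⁴, τ(w) has unit norm, τ(λw) = τ(w) for λ ≠ 0, and
τ(w₀, e^{iα}w₁, e^{2iα}w₂, e^{3iα}w₃) = R_α · τ(w). -/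
theorem statement3 (w0 w1 w2 w3 : ℂ) (hw : ¬(w0 = 0 ∧ w1 = 0 ∧ w2 = 0 ∧ w3 = 0)) :
    nsq (tau4 w0 w1 w2 w3) = 1 ∧
    (∀ lam : ℂ, lam ≠ 0 →
      tau4 (lam * w0) (lam * w1) (lam * w2) (lam * w3) = tau4 w0 w1 w2 w3) ∧
    (∀ α : ℝ,
      tau4 w0 (Complex.exp (Complex.I * (α : ℂ)) * w1)
        (Complex.exp (2 * Complex.I * (α : ℂ)) * w2)
        (Complex.exp (3 * Complex.I * (α : ℂ)) * w3) =
      circAct α (tau4 w0 w1 w2 w3)) := by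
  set a := Complex.normSq w0 with ha
  set b := Complex.normSq w1 with hb
  set c := Complex.normSq w2 with hc
  set d := Complex.normSq w3 with hd
  have hD : 0 < a + b + c + d := by
    have h0 : 0 ≤ a := Complex.normSq_nonneg _
    have h1 : 0 ≤ b := Complex.normSq_nonneg _
    have h2 : 0 ≤ c := Complex.normSq_nonneg _
    have h3 : 0 ≤ d := Complex.normSq_nonneg _
    rcases not_and_or.1 hw with h | h
    · have := Complex.normSq_pos.2 h; linarith
    rcases not_and_or.1 h with h | h
    · have := Complex.normSq_pos.2 h; linarith
    rcases not_and_or.1 h with h | h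
    · have := Complex.normSq_pos.2 h; linarith
    · have := Complex.normSq_pos.2 h; linarith
  have hD' : a + b + c + d ≠ 0 := ne_of_gt hD
  have hDc : ((a + b + c + d : ℝ) : ℂ) ≠ 0 := by exact_mod_cast hD'
  refine ⟨?_, ?_, ?_⟩
  · -- unit norm
    have cross : (conj' w0 * w1 * (starRingEnd ℂ) (conj' w2 * w3)).re =
        (conj' w0 * w2 * (starRingEnd ℂ) (conj' w1 * w3)).re := by
      congr 1
      simp only [conj', map_mul, Complex.conj_conj]
      ring
    have e1 : Complex.normSq (conj' w0 * w1 + conj' w2 * w3) =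
        a * b + c * d + 2 * (conj' w0 * w1 * (starRingEnd ℂ) (conj' w2 * w3)).re := by
      rw [Complex.normSq_add]
      simp only [conj', Complex.normSq_mul, Complex.normSq_conj, ← ha, ← hb, ← hc, ← hd]
    have e2 : Complex.normSq (conj' w0 * w2 - conj' w1 * w3) =
        a * c + b * d - 2 * (conj' w0 * w2 * (starRingEnd ℂ) (conj' w1 * w3)).re := by
      rw [Complex.normSq_sub]
      simp only [conj', Complex.normSq_mul, Complex.normSq_conj, ← ha, ← hb, ← hc, ← hd]
    simp only [nsq, tau4, div_pow, Complex.normSq_div, Complex.normSq_mul,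
      Complex.normSq_ofReal, e1, e2, cross, Complex.normSq_ofNat]
    rw [div_add_div _ _ (by positivity) (by positivity),
      div_add_div _ _ (by positivity) (by positivity),
      div_eq_one_iff_eq (by positivity)]
    ring
  · -- scaling invariance
    intro lam hlam
    have hl : Complex.normSq lam ≠ 0 := ne_of_gt (Complex.normSq_pos.2 hlam)
    have hlc : ((Complex.normSq lam : ℝ) : ℂ) ≠ 0 := by exact_mod_cast hl
    have hcl : conj' lam * lam = ((Complex.normSq lam : ℝ) : ℂ) := by
      rw [conj', Complex.normSq_eq_conj_mul_self]
    have key : Complex.normSq (lam * w0) + Complex.normSq (lam * w1) +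
        Complex.normSq (lam * w2) + Complex.normSq (lam * w3) =
        Complex.normSq lam * (a + b + c + d) := by
      simp only [Complex.normSq_mul, ← ha, ← hb, ← hc, ← hd]; ring
    have num1 : Complex.normSq (lam * w0) + Complex.normSq (lam * w3) -
        Complex.normSq (lam * w1) - Complex.normSq (lam * w2) =
        Complex.normSq lam * (a + d - b - c) := by
      simp only [Complex.normSq_mul, ← ha, ← hb, ← hc, ← hd]; ring
    have num2 : conj' (lam * w0) * (lam * w1) + conj' (lam * w2) * (lam * w3) =
        ((Complex.normSq lam : ℝ) : ℂ) * (conj' w0 * w1 + conj' w2 * w3) := by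
      simp only [conj', map_mul, ← hcl, conj']; ring
    have num3 : conj' (lam * w0) * (lam * w2) - conj' (lam * w1) * (lam * w3) =
        ((Complex.normSq lam : ℝ) : ℂ) * (conj' w0 * w2 - conj' w1 * w3) := by
      simp only [conj', map_mul, ← hcl, conj']; ring
    simp only [tau4, key, num1, num2, num3]
    refine Prod.ext ?_ (Prod.ext ?_ ?_)
    · exact mul_div_mul_left _ _ hl
    · show 2 * (((Complex.normSq lam : ℝ) : ℂ) * (conj' w0 * w1 + conj' w2 * w3)) /
        ((Complex.normSq lam * (a + b + c + d) : ℝ) : ℂ) = _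
      rw [Complex.ofReal_mul, mul_left_comm]
      exact mul_div_mul_left _ _ hlc
    · show 2 * (((Complex.normSq lam : ℝ) : ℂ) * (conj' w0 * w2 - conj' w1 * w3)) /
        ((Complex.normSq lam * (a + b + c + d) : ℝ) : ℂ) = _
      rw [Complex.ofReal_mul, mul_left_comm]
      exact mul_div_mul_left _ _ hlc
  · -- equivariance
    intro α
    set e := Complex.exp (Complex.I * (α : ℂ)) with he
    have habs : Complex.normSq e = 1 := by
      have h1 : ‖e‖ = 1 := by rw [he, mul_comm]; exact Complex.norm_exp_ofReal_mul_I α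
      rw [← Complex.sq_norm, h1, one_pow]
    have he2 : Complex.exp (2 * Complex.I * (α : ℂ)) = e ^ 2 := by
      rw [he, ← Complex.exp_nat_mul]; norm_num; ring_nf
    have he3 : Complex.exp (3 * Complex.I * (α : ℂ)) = e ^ 3 := by
      rw [he, ← Complex.exp_nat_mul]; norm_num; ring_nf
    have hce : (starRingEnd ℂ) e * e = 1 := by
      rw [← Complex.normSq_eq_conj_mul_self, habs, Complex.ofReal_one]
    have key : Complex.normSq w0 + Complex.normSq (e * w1) +
        Complex.normSq (e ^ 2 * w2) + Complex.normSq (e ^ 3 * w3) = a + b + c + d := by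
      simp only [Complex.normSq_mul, map_pow, habs, one_pow, one_mul,
        ← ha, ← hb, ← hc, ← hd]
    have num1 : Complex.normSq w0 + Complex.normSq (e ^ 3 * w3) -
        Complex.normSq (e * w1) - Complex.normSq (e ^ 2 * w2) = a + d - b - c := by
      simp only [Complex.normSq_mul, map_pow, habs, one_pow, one_mul,
        ← ha, ← hb, ← hc, ← hd]
    have num2 : conj' w0 * (e * w1) + conj' (e ^ 2 * w2) * (e ^ 3 * w3) =
        e * (conj' w0 * w1 + conj' w2 * w3) := by
      simp only [conj', map_mul, map_pow]
      calc (starRingEnd ℂ) w0 * (e * w1) +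
            (starRingEnd ℂ) e ^ 2 * (starRingEnd ℂ) w2 * (e ^ 3 * w3)
          = e * ((starRingEnd ℂ) w0 * w1) +
            ((starRingEnd ℂ) e * e) ^ 2 * (e * ((starRingEnd ℂ) w2 * w3)) := by ring
        _ = _ := by rw [hce]; ring
    have num3 : conj' w0 * (e ^ 2 * w2) - conj' (e * w1) * (e ^ 3 * w3) =
        e ^ 2 * (conj' w0 * w2 - conj' w1 * w3) := by
      simp only [conj', map_mul]
      calc (starRingEnd ℂ) w0 * (e ^ 2 * w2) -
            (starRingEnd ℂ) e * (starRingEnd ℂ) w1 * (e ^ 3 * w3)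
          = e ^ 2 * ((starRingEnd ℂ) w0 * w2) -
            ((starRingEnd ℂ) e * e) * (e ^ 2 * ((starRingEnd ℂ) w1 * w3)) := by ring
        _ = _ := by rw [hce]; ring
    simp only [tau4, he2, he3, key, num1, num2, num3, circAct]
    refine Prod.ext rfl (Prod.ext ?_ ?_)
    · show 2 * (e * (conj' w0 * w1 + conj' w2 * w3)) / ((a + b + c + d : ℝ) : ℂ) =
        e * (2 * (conj' w0 * w1 + conj' w2 * w3) / ((a + b + c + d : ℝ) : ℂ))
      rw [← mul_div_assoc]; ring_nf
    · show 2 * (e ^ 2 * (conj' w0 * w2 - conj' w1 * w3)) / ((a + b + c + d : ℝ) : ℂ) =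
        e ^ 2 * (2 * (conj' w0 * w2 - conj' w1 * w3) / ((a + b + c + d : ℝ) : ℂ))
      rw [← mul_div_assoc]; ring_nf
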